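/- Let κ, γ₁, γ₂, γ₃ > 0 and take f = 0 (external zinc concentration μ = 0). Then u* = (κ/(1+κ), 0, 1, 0) is a steady state of the ZIP regulatory system, and the characteristic polynomial of the Jacobian J(u*) equals (X+1)²·(X+κ+1)·(X+γ₃+1); in particular the eigenvalues of J(u*) are −1 (with multiplicity two), −κ−1, and −γ₃−1. -/

import Mathlib

open Polynomial

/-- The ZIP regulatory vector field on ℝ⁴ (components indexed by `Fin 4`). -/
noncomputable def zipField (κ γ₁ γ₂ γ₃ f : ℝ) (u : Fin 4 → ℝ) : Fin 4 → ℝ :=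
  ![κ * (u 2) ^ 2 * (1 - u 0) - u 0,
    u 0 * f - u 1,
    1 - γ₁ * u 2 * u 3 - u 2,
    γ₂ * u 1 - γ₃ * u 2 * u 3 - (1 + γ₂ * u 1) * u 3]

/-- The Jacobian matrix of the ZIP regulatory vector field at a point u. -/
noncomputable def zipJacobian (κ γ₁ γ₂ γ₃ f : ℝ) (u : Fin 4 → ℝ) :
    Matrix (Fin 4) (Fin 4) ℝ :=
  !![-(κ * (u 2) ^ 2) - 1, 0, 2 * κ * u 2 * (1 - u 0), 0;
     f, -1, 0, 0;
     0, 0, -(γ₁ * u 3) - 1, -(γ₁ * u 2);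
     0, γ₂ * (1 - u 3), -(γ₃ * u 3), -(γ₃ * u 2) - 1 - γ₂ * u 1]

/-- for f = 0 (zero external zinc), u* = (κ/(1+κ), 0, 1, 0) is
a steady state, the characteristic polynomial of the Jacobian there is
(X+1)²(X+κ+1)(X+γ₃+1), and the real eigenvalues are exactly −1, −(κ+1),
−(γ₃+1). -/
theorem zip_eigenvalues_at_zero_zinc
    (κ γ₁ γ₂ γ₃ : ℝ) (hκ : 0 < κ) (hγ₁ : 0 < γ₁) (hγ₂ : 0 < γ₂) (hγ₃ : 0 < γ₃) :
    zipField κ γ₁ γ₂ γ₃ 0 ![κ / (1 + κ), 0, 1, 0] = 0 ∧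
    (zipJacobian κ γ₁ γ₂ γ₃ 0 ![κ / (1 + κ), 0, 1, 0]).charpoly =
      (X + 1) ^ 2 * (X + C (κ + 1)) * (X + C (γ₃ + 1)) ∧
    (∀ lam : ℝ,
      (lam • (1 : Matrix (Fin 4) (Fin 4) ℝ) -
        zipJacobian κ γ₁ γ₂ γ₃ 0 ![κ / (1 + κ), 0, 1, 0]).det = 0 ↔
      (lam = -1 ∨ lam = -κ - 1 ∨ lam = -γ₃ - 1)) := by
  have h1κ : (1 : ℝ) + κ ≠ 0 := by positivity
  refine ⟨?_, ?_, ?_⟩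
  · funext i
    fin_cases i <;>
      simp [zipField] <;> field_simp <;> ring
  · rw [Matrix.charpoly]
    simp [Matrix.det_succ_row_zero, Fin.sum_univ_succ, Matrix.charmatrix_apply,
      zipJacobian, Matrix.one_apply, Fin.succ_ne_zero]
    ring
  · intro lam
    have hdet : (lam • (1 : Matrix (Fin 4) (Fin 4) ℝ) -
        zipJacobian κ γ₁ γ₂ γ₃ 0 ![κ / (1 + κ), 0, 1, 0]).det =
        (lam + 1) ^ 2 * (lam + (κ + 1)) * (lam + (γ₃ + 1)) := by
      simp [Matrix.det_succ_row_zero, Fin.sum_univ_succ, zipJacobian, Matrix.one_apply,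
        Fin.succ_ne_zero]
      ring
    rw [hdet]
    constructor
    · intro h
      rcases mul_eq_zero.mp h with h | h
      · rcases mul_eq_zero.mp h with h | h
        · left; have := pow_eq_zero_iff (n := 2) (by norm_num) |>.mp h; linarith
        · right; left; linarith
      · right; right; linarith
    · rintro (h | h | h) <;> subst h <;> ring
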